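/- Let A be a weakly acyclic NFA over a finite alphabet Σ with state set Q. Then the DFA obtained from A by the powerset construction — whose states are the subsets of Q, whose transition function is δ'(S, a) = ⋃_{q ∈ S} δ(q, a), whose initial state is {q₀}, and whose accepting states are the subsets intersecting the accepting states of A — is a weakly acyclic DFA. -/

import Mathlib

/-- A DFA is *weakly acyclic* if whenever a nonempty word `w` loops on a state `q`,
every letter occurring in `w` self-loops on `q`. -/
def DFA.WeaklyAcyclic {α : Type*} {σ : Type*} (A : DFA α σ) : Prop :=
  ∀ (q : σ) (w : List α), w ≠ [] → A.evalFrom q w = q → ∀ a ∈ w, A.step q a = q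

/-- A language is weakly acyclic if it is accepted by some weakly acyclic DFA
with finitely many states. -/
def Language.IsWeaklyAcyclic {α : Type*} (L : Language α) : Prop :=
  ∃ (σ : Type) (_ : Fintype σ) (A : DFA α σ), A.WeaklyAcyclic ∧ A.accepts = L

/-- The residual of the language `L` with respect to the word `u`. -/
def Language.residual {α : Type*} (L : Language α) (u : List α) : Language α :=
  {v | u ++ v ∈ L}

/-- An NFA is *weakly acyclic* if whenever `q ∈ δ(q, w)` for a nonempty word `w`,
every letter occurring in `w` satisfies `δ(q, a) = {q}`. -/
def NFA.WeaklyAcyclic {α : Type*} {σ : Type*} (M : NFA α σ) : Prop :=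
  ∀ (q : σ) (w : List α), w ≠ [] → q ∈ M.evalFrom {q} w → ∀ a ∈ w, M.step q a = {q}

private lemma nfaEvalFrom_mono {α σ : Type*} (M : NFA α σ) {S T : Set σ} (h : S ⊆ T)
    (w : List α) : M.evalFrom S w ⊆ M.evalFrom T w := by
  induction w generalizing S T with
  | nil => exact h
  | cons a w ih =>
    exact ih (by
      intro x hx
      rw [NFA.mem_stepSet] at hx ⊢
      obtain ⟨t, ht, hx⟩ := hx
      exact ⟨t, h ht, hx⟩)

private lemma nfaEvalFrom_append {α σ : Type*} (M : NFA α σ) (S : Set σ) (u v : List α) :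
    M.evalFrom S (u ++ v) = M.evalFrom (M.evalFrom S u) v := by
  simp [NFA.evalFrom]

private lemma nfaMem_evalFrom {α σ : Type*} (M : NFA α σ) (S : Set σ) (w : List α) (q : σ) :
    q ∈ M.evalFrom S w ↔ ∃ p ∈ S, q ∈ M.evalFrom {p} w := by
  induction w generalizing S with
  | nil => simp
  | cons a w ih =>
    constructor
    · intro hq
      rw [show M.evalFrom S (a :: w) = M.evalFrom (M.stepSet S a) w from rfl, ih] at hq
      obtain ⟨r, hr, hq⟩ := hq
      rw [NFA.mem_stepSet] at hr
      obtain ⟨p, hp, hr⟩ := hr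
      refine ⟨p, hp, ?_⟩
      have hsub : ({r} : Set σ) ⊆ M.stepSet {p} a := by
        simp only [NFA.stepSet, Set.mem_singleton_iff, Set.iUnion_iUnion_eq_left,
          Set.singleton_subset_iff]
        exact hr
      exact nfaEvalFrom_mono M hsub w hq
    · rintro ⟨p, hp, hq⟩
      exact nfaEvalFrom_mono M (Set.singleton_subset_iff.2 hp) _ hq

private lemma nfaEvalFrom_selfloop {α σ : Type*} (M : NFA α σ) (q : σ) (w : List α)
    (h : ∀ a ∈ w, M.step q a = {q}) : M.evalFrom {q} w = {q} := by
  induction w with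
  | nil => rfl
  | cons a w ih =>
    have h1 : M.stepSet {q} a = {q} := by
      simp [NFA.stepSet, h a List.mem_cons_self]
    rw [show M.evalFrom {q} (a :: w) = M.evalFrom (M.stepSet {q} a) w from rfl, h1]
    exact ih fun b hb => h b (List.mem_cons_of_mem _ hb)

/-- The powerset construction applied to a weakly acyclic NFA yields a
weakly acyclic DFA. -/
theorem powerset_of_weaklyAcyclic_nfa {α σ : Type} [Fintype α] [Fintype σ]
    (M : NFA α σ) (q₀ : σ) (hstart : M.start = {q₀})
    (h : M.WeaklyAcyclic) : M.toDFA.WeaklyAcyclic := by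
  intro S w hw hloop a ha
  have hloop' : M.evalFrom S w = S := hloop
  -- Key claim: every state in S self-loops on every letter of w
  have key : ∀ q ∈ S, ∀ b ∈ w, M.step q b = {q} := by
    intro q hq
    have hstep : ∀ r : σ, ∃ p : σ, r ∈ S → p ∈ S ∧ r ∈ M.evalFrom {p} w := by
      intro r
      by_cases hr : r ∈ S
      · have : r ∈ M.evalFrom S w := by rw [hloop']; exact hr
        obtain ⟨p, hp, hrp⟩ := (nfaMem_evalFrom M S w r).1 this
        exact ⟨p, fun _ => ⟨hp, hrp⟩⟩
      · exact ⟨r, fun hr' => absurd hr' hr⟩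
    choose f hf using hstep
    have hmemS : ∀ n, f^[n] q ∈ S := by
      intro n
      induction n with
      | zero => exact hq
      | succ n ih =>
        rw [Function.iterate_succ_apply']
        exact (hf _ ih).1
    have hchain : ∀ n, f^[n] q ∈ M.evalFrom {f^[n + 1] q} w := by
      intro n
      rw [Function.iterate_succ_apply']
      exact (hf _ (hmemS n)).2
    -- trace back m steps
    have htrace : ∀ n m, f^[n] q ∈ M.evalFrom {f^[n + m] q} (List.flatten (List.replicate m w)) := by
      intro n m
      induction m with
      | zero => simp
      | succ m ih =>
        have : List.flatten (List.replicate (m + 1) w)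
            = w ++ List.flatten (List.replicate m w) := by
          simp [List.replicate_succ]
        rw [this, nfaEvalFrom_append]
        have hsub : ({f^[n + m] q} : Set σ) ⊆ M.evalFrom {f^[n + m + 1] q} w :=
          Set.singleton_subset_iff.2 (hchain (n + m))
        have := nfaEvalFrom_mono M hsub (List.flatten (List.replicate m w)) ih
        simpa [Nat.add_assoc] using this
    -- pigeonhole
    obtain ⟨i, j, hij, heq⟩ : ∃ i j, i < j ∧ f^[i] q = f^[j] q := by
      obtain ⟨x, y, hne, heq⟩ := Finite.exists_ne_map_eq_of_infinite (fun n : ℕ => f^[n] q)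
      rcases hne.lt_or_gt with h' | h'
      · exact ⟨x, y, h', heq⟩
      · exact ⟨y, x, h', heq.symm⟩
    set m := j - i with hm
    have hm0 : m ≠ 0 := Nat.sub_ne_zero_of_lt hij
    have hji : i + m = j := by omega
    have hcyc : f^[i] q ∈ M.evalFrom {f^[i] q} (List.flatten (List.replicate m w)) := by
      have := htrace i m
      rw [hji, ← heq] at this
      exact this
    have hwne : List.flatten (List.replicate m w) ≠ [] := by
      obtain ⟨m', hm'⟩ := Nat.exists_eq_succ_of_ne_zero hm0
      rw [hm']
      simp [List.replicate_succ, hw]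
    have hmemflat : ∀ b ∈ w, b ∈ List.flatten (List.replicate m w) := by
      intro b hb
      rw [List.mem_flatten]
      exact ⟨w, List.mem_replicate.2 ⟨hm0, rfl⟩, hb⟩
    have hsl : ∀ b ∈ w, M.step (f^[i] q) b = {f^[i] q} := fun b hb =>
      h (f^[i] q) _ hwne hcyc b (hmemflat b hb)
    have hself : M.evalFrom {f^[i] q} w = {f^[i] q} := nfaEvalFrom_selfloop M _ w hsl
    -- propagate back: f^[i - k] q = f^[i] q for all k
    have hdown : ∀ k, f^[i - k] q = f^[i] q := by
      intro k
      induction k with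
      | zero => rfl
      | succ k ih =>
        by_cases hik : i ≤ k
        · have : i - (k + 1) = i - k := by omega
          rw [this, ih]
        · have hk1 : i - k = (i - (k + 1)) + 1 := by omega
          have := hchain (i - (k + 1))
          rw [← hk1, ih, hself] at this
          exact this
    have hq0 : q = f^[i] q := by
      have := hdown i
      simpa using this
    intro b hb
    rw [hq0]
    exact hsl b hb
  -- conclude
  show M.stepSet S a = S
  ext x
  rw [NFA.mem_stepSet]
  constructor
  · rintro ⟨t, ht, hx⟩
    rw [key t ht a ha] at hx
    exact hx ▸ ht
  · intro hx
    exact ⟨x, hx, by rw [key x hx a ha]; rfl⟩
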